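/- Given a sequential plan P solving a planning problem, there exists a plan P* satisfying the make-progress rule (no later state is a subset of any earlier state) with total action cost at most that of P and makespan at most that of P. -/

import Mathlib

structure Strips (F A : Type) where
  init : Set F
  goal : Set F
  pre : A → Set F
  add : A → Set F
  del : A → Set F
  cost : A → ℕ

def Strips.step {F A : Type} (Q : Strips F A) (s : Set F) (a : A) : Set F :=
  (s \ Q.del a) ∪ Q.add a

def Strips.run {F A : Type} (Q : Strips F A) (s : Set F) (p : List A) : Set F :=
  p.foldl Q.step s

def Strips.ValidFrom {F A : Type} (Q : Strips F A) : Set F → List A → Prop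
  | _, [] => True
  | s, a :: p => Q.pre a ⊆ s ∧ Q.ValidFrom (Q.step s a) p

def Strips.Solves {F A : Type} (Q : Strips F A) (p : List A) : Prop :=
  Q.ValidFrom Q.init p ∧ Q.goal ⊆ Q.run Q.init p

def Strips.planCost {F A : Type} (Q : Strips F A) (p : List A) : ℕ :=
  (p.map Q.cost).sum

/-- The layered make-progress rule: in the induced state sequence, no state at a
later index is a subset of a state at an earlier index. -/
def Strips.MakesProgress {F A : Type} (Q : Strips F A) (s : Set F) (p : List A) : Prop :=
  ∀ i j : ℕ, i < j → j ≤ p.length → ¬ Q.run s (p.take j) ⊆ Q.run s (p.take i)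

/-- The delete-free relaxation: all delete-effects removed. -/
def Strips.relax {F A : Type} (Q : Strips F A) : Strips F A :=
  { Q with del := fun _ => ∅ }

namespace Strips
variable {F A : Type} (Q : Strips F A)

theorem run_append (s : Set F) (p q : List A) :
    Q.run s (p ++ q) = Q.run (Q.run s p) q := List.foldl_append

theorem step_mono {s t : Set F} (h : s ⊆ t) (a : A) : Q.step s a ⊆ Q.step t a :=
  Set.union_subset_union_left _ (Set.diff_subset_diff_left h)

theorem run_mono : ∀ (p : List A) {s t : Set F}, s ⊆ t → Q.run s p ⊆ Q.run t p
  | [], _, _, h => h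
  | a :: p, s, t, h => run_mono p (step_mono Q h a)

theorem valid_mono : ∀ (p : List A) {s t : Set F}, s ⊆ t → Q.ValidFrom s p → Q.ValidFrom t p
  | [], _, _, _, _ => trivial
  | a :: p, s, t, h, ⟨hpre, hrest⟩ => ⟨hpre.trans h, valid_mono p (step_mono Q h a) hrest⟩

theorem valid_append (p : List A) : ∀ (s : Set F) (q : List A),
    Q.ValidFrom s (p ++ q) ↔ Q.ValidFrom s p ∧ Q.ValidFrom (Q.run s p) q := by
  induction p with
  | nil => intro s q; simp [ValidFrom, run]
  | cons a p ih => intro s q; simp [ValidFrom, run, ih, and_assoc]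

theorem planCost_append (p q : List A) :
    Q.planCost (p ++ q) = Q.planCost p + Q.planCost q := by
  simp [planCost]

theorem planCost_take_le (n : ℕ) (p : List A) : Q.planCost (p.take n) ≤ Q.planCost p := by
  conv_rhs => rw [← List.take_append_drop n p]
  rw [planCost_append]; exact Nat.le_add_right _ _

theorem aux : ∀ (n : ℕ) (P : List A), P.length ≤ n → Q.Solves P →
    ∃ P' : List A, Q.Solves P' ∧ Q.MakesProgress Q.init P' ∧
      Q.planCost P' ≤ Q.planCost P ∧ P'.length ≤ P.length := by
  intro n
  induction n with
  | zero =>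
    intro P hlen hP
    refine ⟨P, hP, ?_, le_refl _, le_refl _⟩
    intro i j hij hj
    omega
  | succ n ih =>
    intro P hlen hP
    by_cases hmp : Q.MakesProgress Q.init P
    · exact ⟨P, hP, hmp, le_refl _, le_refl _⟩
    · simp only [MakesProgress, not_forall] at hmp
      obtain ⟨i, j, hij, hj, hsub⟩ := hmp
      rw [not_not] at hsub
      set P' : List A := P.take i ++ P.drop j with hP'
      have hilen : i ≤ P.length := le_of_lt (lt_of_lt_of_le hij hj)
      have hlen' : P'.length = i + (P.length - j) := by
        simp [hP', List.length_take, List.length_drop]; omega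
      have hshort : P'.length < P.length := by omega
      have hval : Q.ValidFrom Q.init P' := by
        rw [hP', valid_append]
        constructor
        · have := hP.1
          conv at this => rw [← List.take_append_drop i P]
          rw [valid_append] at this
          exact this.1
        · have := hP.1
          conv at this => rw [← List.take_append_drop j P]
          rw [valid_append] at this
          exact Q.valid_mono _ hsub this.2
      have hruns : Q.run Q.init P ⊆ Q.run Q.init P' := by
        rw [hP', run_append]
        conv_lhs => rw [← List.take_append_drop j P]
        rw [run_append]
        exact Q.run_mono _ hsub
      have hsolves : Q.Solves P' := ⟨hval, hP.2.trans hruns⟩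
      have hcost : Q.planCost P' ≤ Q.planCost P := by
        rw [hP', planCost_append]
        conv_rhs => rw [← List.take_append_drop j P]
        rw [planCost_append]
        have h1 : Q.planCost (P.take i) ≤ Q.planCost (P.take j) := by
          have : P.take i = (P.take j).take i := by
            rw [List.take_take]; congr 1; omega
          rw [this]; exact Q.planCost_take_le _ _
        omega
      obtain ⟨P'', h1, h2, h3, h4⟩ := ih P' (by omega) hsolves
      exact ⟨P'', h1, h2, h3.trans hcost, h4.trans hshort.le⟩

end Strips

/-- Given a sequential plan solving a planning problem, there exists a plan satisfying
the make-progress rule with total cost at most that of the given plan and makespan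
(length) at most that of the given plan. -/
theorem exists_progress_plan {F A : Type} (Q : Strips F A) (P : List A)
    (hP : Q.Solves P) :
    ∃ P' : List A, Q.Solves P' ∧ Q.MakesProgress Q.init P' ∧
      Q.planCost P' ≤ Q.planCost P ∧ P'.length ≤ P.length :=
  Q.aux P.length P (le_refl _) hP
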